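/- Finite trees glue along orbit cuts: Let Σ₁ be a section in ℤQ (Q a finite tree quiver), and suppose removing an edge L — N of Σ₁ splits it into two subtrees Σ₁^M (containing a fixed vertex M and L) and Σ₁^N (containing N). If the arrow is L → N, then the full subquiver Σ₂ of ℤQ on the vertices of Σ₁^M ∪ τΣ₁^N is again a section of ℤQ containing M and meeting every τ-orbit exactly once. -/

import Mathlib

/- STATEMENT 14: Gluing sections along orbit cuts in ℤQ for Q a finite tree quiver:
   if removing an edge L → N of a section Σ₁ splits it into subtrees Σ₁^M ∋ M, L and
   Σ₁^N ∋ N, then Σ₁^M ∪ τΣ₁^N is again a section containing M, meeting every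
   τ-orbit exactly once. -/

namespace Stmt14

variable {Q0 : Type*}

def ZArrow (QArrow : Q0 → Q0 → Prop) : ℤ × Q0 → ℤ × Q0 → Prop :=
  fun x y => (y.1 = x.1 ∧ QArrow x.2 y.2) ∨ (y.1 = x.1 + 1 ∧ QArrow y.2 x.2)

def tauZQ (Q0 : Type*) : Equiv.Perm (ℤ × Q0) :=
  ⟨fun x => (x.1 - 1, x.2), fun x => (x.1 + 1, x.2),
    fun x => by simp, fun x => by simp⟩

def IsPathOn {V : Type*} (Arrow : V → V → Prop) (p : ℕ → V) (t : ℕ) : Prop :=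
  ∀ i < t, Arrow (p i) (p (i + 1))

/-- Connectedness of the full subquiver on `S`. -/
def ConnectedOn {V : Type*} (Arrow : V → V → Prop) (S : Set V) : Prop :=
  ∀ x ∈ S, ∀ y ∈ S, Relation.ReflTransGen
    (fun a b => a ∈ S ∧ b ∈ S ∧ (Arrow a b ∨ Arrow b a)) x y

def IsSection {V : Type*} (Arrow : V → V → Prop) (τ : Equiv.Perm V) (S : Set V) : Prop :=
  ConnectedOn Arrow S ∧
  (∀ (p : ℕ → V) (t : ℕ), 0 < t → IsPathOn Arrow p t → (∀ i ≤ t, p i ∈ S) → p 0 ≠ p t) ∧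
  (∀ x : V, ∃! n : ℤ, (τ ^ n) x ∈ S) ∧
  (∀ (p : ℕ → V) (t : ℕ), IsPathOn Arrow p t → p 0 ∈ S → p t ∈ S → ∀ i ≤ t, p i ∈ S)

/-- The underlying graph of the quiver Q. -/
def underlyingGraph (QArrow : Q0 → Q0 → Prop) : SimpleGraph Q0 where
  Adj a b := a ≠ b ∧ (QArrow a b ∨ QArrow b a)
  symm := ⟨fun a b h => ⟨h.1.symm, h.2.symm⟩⟩
  loopless := ⟨fun a h => h.1 rfl⟩

lemma tau_pow (n : ℤ) : ∀ x : ℤ × Q0, ((tauZQ Q0) ^ n) x = (x.1 - n, x.2) := by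
  induction n using Int.induction_on with
  | zero => intro x; simp
  | succ k ih =>
      intro x
      rw [zpow_add_one, Equiv.Perm.mul_apply, ih]
      show ((tauZQ Q0 x).1 - k, (tauZQ Q0 x).2) = _
      have : tauZQ Q0 x = (x.1 - 1, x.2) := rfl
      rw [this]
      simp only [Prod.mk.injEq]
      exact ⟨by ring, trivial⟩
  | pred k ih =>
      intro x
      rw [zpow_sub_one, Equiv.Perm.mul_apply, ih]
      have : (tauZQ Q0)⁻¹ x = (x.1 + 1, x.2) := rfl
      rw [this]
      simp only [Prod.mk.injEq]
      exact ⟨by ring, trivial⟩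

lemma mono_of_step (u : ℕ → ℤ) (t : ℕ) (h : ∀ i < t, u i ≤ u (i + 1)) :
    ∀ i j, i ≤ j → j ≤ t → u i ≤ u j := by
  intro i j hij hjt
  induction hij with
  | refl => exact le_rfl
  | @step m hm ih =>
      exact (ih (by omega)).trans (h m (by omega))

lemma chain_of_steps {V : Type*} (R : V → V → Prop) (w : ℕ → V) (s t : ℕ) (hst : s ≤ t)
    (h : ∀ i, s ≤ i → i < t → R (w i) (w (i + 1))) :
    Relation.ReflTransGen R (w s) (w t) := by
  revert h
  induction t, hst using Nat.le_induction with
  | base => intro _; exact .refl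
  | succ n hsn ih =>
      intro h
      exact (ih fun i hi hlt => h i hi (by omega)).tail (h n hsn (by omega))

lemma split_chain {V : Type*} {R Bad : V → V → Prop} {a b : V}
    (h : Relation.ReflTransGen R a b) :
    Relation.ReflTransGen (fun u v => R u v ∧ ¬ Bad u v) a b ∨ ∃ u v, R u v ∧ Bad u v := by
  induction h with
  | refl => exact .inl .refl
  | @tail b c hab hbc ih =>
      rcases ih with ih | ih
      · by_cases hB : Bad b c
        · exact .inr ⟨_, _, hbc, hB⟩
        · exact .inl (ih.tail ⟨hbc, hB⟩)
      · exact .inr ih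

lemma no_avoid {G : SimpleGraph Q0} (hT : G.IsAcyclic) {a b : Q0} (hab : G.Adj a b)
    (h : Relation.ReflTransGen
      (fun u v => G.Adj u v ∧ ¬((u = a ∧ v = b) ∨ (u = b ∧ v = a))) a b) : False := by
  have hbr := (SimpleGraph.isAcyclic_iff_forall_adj_isBridge.mp hT) hab
  rw [SimpleGraph.isBridge_iff] at hbr
  apply hbr
  rw [SimpleGraph.reachable_iff_reflTransGen]
  refine Relation.ReflTransGen.mono ?_ _ _ h
  rintro u v ⟨huv, hbad⟩
  rw [SimpleGraph.deleteEdges_adj]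
  refine ⟨huv, ?_⟩
  intro hmem
  rw [Set.mem_singleton_iff, Sym2.eq_iff] at hmem
  exact hbad hmem


lemma no_closed (QArrow : Q0 → Q0 → Prop)
    (hT : (underlyingGraph QArrow).IsAcyclic)
    (hloop : ∀ q, ¬ QArrow q q)
    (h2 : ∀ p q, QArrow p q → QArrow q p → False) :
    ∀ t, 0 < t → ∀ w : ℕ → Q0, (∀ i < t, QArrow (w i) (w (i + 1))) → w 0 ≠ w t := by
  intro t
  induction t using Nat.strong_induction_on with
  | _ t ih =>
  intro ht w hw hclosed
  have h01 : QArrow (w 0) (w 1) := hw 0 ht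
  have hne : w 0 ≠ w 1 := by intro he; rw [← he] at h01; exact hloop _ h01
  by_cases hexi : ∃ i, 1 ≤ i ∧ i < t ∧ w i = w 0 ∧ w (i + 1) = w 1
  · obtain ⟨i, hi1, hit, hw0, hw1⟩ := hexi
    exact ih i hit hi1 (fun j => w (j + 1)) (fun j hj => hw (j + 1) (by omega))
      (by simpa using hw1.symm)
  · push_neg at hexi
    have hadj : (underlyingGraph QArrow).Adj (w 1) (w 0) := ⟨hne.symm, Or.inr h01⟩
    have hsteps : ∀ i, 1 ≤ i → i < t →
        ((underlyingGraph QArrow).Adj (w i) (w (i + 1)) ∧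
          ¬((w i = w 1 ∧ w (i + 1) = w 0) ∨ (w i = w 0 ∧ w (i + 1) = w 1))) := by
      intro i hi1 hit
      have hQ := hw i hit
      have hnei : w i ≠ w (i + 1) := by intro he; rw [← he] at hQ; exact hloop _ hQ
      refine ⟨⟨hnei, Or.inl hQ⟩, ?_⟩
      rintro (⟨e1, e2⟩ | ⟨e1, e2⟩)
      · rw [e1, e2] at hQ; exact h2 _ _ h01 hQ
      · exact hexi i hi1 hit e1 e2
    have hchain := chain_of_steps
      (fun u v => (underlyingGraph QArrow).Adj u v ∧
        ¬((u = w 1 ∧ v = w 0) ∨ (u = w 0 ∧ v = w 1))) w 1 t ht hsteps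
    rw [← hclosed] at hchain
    exact no_avoid hT hadj hchain


theorem glue_section_along_orbit_cut
    [Fintype Q0] (QArrow : Q0 → Q0 → Prop)
    -- Q is a tree quiver
    (hTree : (underlyingGraph QArrow).IsTree)
    (S1 : Set (ℤ × Q0))
    (hS1 : IsSection (ZArrow QArrow) (tauZQ Q0) S1)
    (M L N : ℤ × Q0) (hM : M ∈ S1) (hL : L ∈ S1) (hN : N ∈ S1)
    -- the arrow L → N of Σ₁
    (hLN : ZArrow QArrow L N)
    -- removing the edge L — N splits Σ₁ into two subtrees SM ∋ M, L and SN ∋ N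
    (SM SN : Set (ℤ × Q0))
    (hunion : S1 = SM ∪ SN) (hdisj : Disjoint SM SN)
    (hMin : M ∈ SM) (hLin : L ∈ SM) (hNin : N ∈ SN)
    (hSMconn : ConnectedOn (ZArrow QArrow) SM)
    (hSNconn : ConnectedOn (ZArrow QArrow) SN)
    -- the only edge of Σ₁ between the two parts is L — N
    (hcut : ∀ x ∈ SM, ∀ y ∈ SN,
      (ZArrow QArrow x y ∨ ZArrow QArrow y x) → x = L ∧ y = N) :
    -- conclusion: Σ₂ = SM ∪ τSN is again a section containing M
    IsSection (ZArrow QArrow) (tauZQ Q0) (SM ∪ (tauZQ Q0) '' SN) ∧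
    M ∈ SM ∪ (tauZQ Q0) '' SN := by
  classical
  obtain ⟨hconn1, hacyc1, horb1, hconv1⟩ := hS1
  have hT : (underlyingGraph QArrow).IsAcyclic := hTree.2
  -- the height function of S1
  have hexf : ∀ q : Q0, ∃ c : ℤ, ((c, q) : ℤ × Q0) ∈ S1 := by
    intro q
    obtain ⟨n, hn, -⟩ := horb1 (0, q)
    rw [tau_pow] at hn
    exact ⟨0 - n, hn⟩
  choose f hf using hexf
  have huniq : ∀ (c : ℤ) (q : Q0), ((c, q) : ℤ × Q0) ∈ S1 → c = f q := by
    intro c q hc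
    obtain ⟨n, hn, hu⟩ := horb1 (0, q)
    have h1 : -c = n := by
      apply hu
      rw [tau_pow]
      simpa using hc
    have h2 : -(f q) = n := by
      apply hu
      rw [tau_pow]
      simpa using hf q
    omega
  have hmemS1 : ∀ x : ℤ × Q0, x ∈ S1 → x.1 = f x.2 := fun x hx => huniq x.1 x.2 hx
  -- no loops and no 2-cycles in Q
  have hnoloop : ∀ q, ¬ QArrow q q := by
    intro q hq
    exact hacyc1 (fun _ => (f q, q)) 1 one_pos (fun i _ => Or.inl ⟨rfl, hq⟩)
      (fun i _ => hf q) rfl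
  have hno2 : ∀ p q, QArrow p q → QArrow q p → False := by
    intro p q hpq hqp
    set P : ℕ → ℤ × Q0 := fun i => if i = 1 then (f p, q) else (f p, p) with hP
    have hpath : IsPathOn (ZArrow QArrow) P 2 := by
      intro i hi
      interval_cases i
      · simp only [P]
        norm_num
        exact Or.inl ⟨rfl, hpq⟩
      · simp only [P]
        norm_num
        exact Or.inl ⟨rfl, hqp⟩
    have hmid : ((f p, q) : ℤ × Q0) ∈ S1 := by
      have h := hconv1 P 2 hpath (by simp only [P]; norm_num; exact hf p)
        (by simp only [P]; norm_num; exact hf p) 1 (by omega)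
      simpa [P] using h
    apply hacyc1 P 2 two_pos hpath ?_ (by simp [P])
    intro i hi
    interval_cases i <;> simp only [P] <;> norm_num
    · exact hf p
    · exact hmid
    · exact hf p
  -- over every edge of Q there is an arrow between the S1-points
  have hedge : ∀ p q : Q0, (underlyingGraph QArrow).Adj p q →
      ZArrow QArrow (f p, p) (f q, q) ∨ ZArrow QArrow (f q, q) (f p, p) := by
    intro p q hadj
    have hchain := hconn1 (f p, p) (hf p) (f q, q) (hf q)
    rcases split_chain (Bad := fun u v : ℤ × Q0 =>
        (u.2 = p ∧ v.2 = q) ∨ (u.2 = q ∧ v.2 = p)) hchain with hgood | ⟨u, v, ⟨hu, hv, harr⟩, hbad⟩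
    · exfalso
      apply no_avoid hT hadj
      have := Relation.ReflTransGen.lift (r := fun a b : ℤ × Q0 =>
          (a ∈ S1 ∧ b ∈ S1 ∧ (ZArrow QArrow a b ∨ ZArrow QArrow b a)) ∧
          ¬((a.2 = p ∧ b.2 = q) ∨ (a.2 = q ∧ b.2 = p)))
        (p := fun u v : Q0 => (underlyingGraph QArrow).Adj u v ∧
          ¬((u = p ∧ v = q) ∨ (u = q ∧ v = p)))
        Prod.snd ?_ _ _ hgood
      · exact this
      · rintro a b ⟨⟨ha, hb, harr⟩, hbad⟩
        have hQ : QArrow a.2 b.2 ∨ QArrow b.2 a.2 := by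
          rcases harr with (⟨-, h⟩ | ⟨-, h⟩) | (⟨-, h⟩ | ⟨-, h⟩)
          · exact Or.inl h
          · exact Or.inr h
          · exact Or.inr h
          · exact Or.inl h
        have hne : a.2 ≠ b.2 := by
          intro he
          rcases hQ with h | h
          · rw [← he] at h; exact hnoloop _ h
          · rw [← he] at h; exact hnoloop _ h
        exact ⟨⟨hne, hQ⟩, hbad⟩
    · rcases hbad with ⟨h1, h2⟩ | ⟨h1, h2⟩
      · have eu : u = (f p, p) := by
          have h := hmemS1 u hu; rw [h1] at h; exact Prod.ext h h1
        have ev : v = (f q, q) := by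
          have h := hmemS1 v hv; rw [h2] at h; exact Prod.ext h h2
        rw [eu, ev] at harr
        exact harr
      · have eu : u = (f q, q) := by
          have h := hmemS1 u hu; rw [h1] at h; exact Prod.ext h h1
        have ev : v = (f p, p) := by
          have h := hmemS1 v hv; rw [h2] at h; exact Prod.ext h h2
        rw [eu, ev] at harr
        exact harr.symm
  have hfcompat : ∀ p q, QArrow p q → f q = f p ∨ f q = f p - 1 := by
    intro p q hpq
    have hne : p ≠ q := by intro h; rw [h] at hpq; exact hnoloop q hpq
    rcases hedge p q ⟨hne, Or.inl hpq⟩ with h | h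
    · rcases h with ⟨h1, -⟩ | ⟨-, h2⟩
      · exact Or.inl h1
      · exact (hno2 p q hpq h2).elim
    · rcases h with ⟨-, h2⟩ | ⟨h1, -⟩
      · exact (hno2 p q hpq h2).elim
      · right; omega
  -- the glued height function g and membership in S2
  have hSMS1 : SM ⊆ S1 := by rw [hunion]; exact Set.subset_union_left
  have hSNS1 : SN ⊆ S1 := by rw [hunion]; exact Set.subset_union_right
  set g : Q0 → ℤ := fun q => if (f q, q) ∈ SM then f q else f q - 1 with hg
  have hSN_of_not : ∀ q : Q0, ((f q, q) : ℤ × Q0) ∉ SM → ((f q, q) : ℤ × Q0) ∈ SN := by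
    intro q h
    have := hf q
    rw [hunion] at this
    rcases this with h' | h'
    · exact (h h').elim
    · exact h'
  have htau_apply : ∀ x : ℤ × Q0, tauZQ Q0 x = (x.1 - 1, x.2) := fun _ => rfl
  have hS2mem : ∀ x : ℤ × Q0, x ∈ SM ∪ (tauZQ Q0) '' SN ↔ x.1 = g x.2 := by
    intro x
    constructor
    · rintro (hx | ⟨y, hy, rfl⟩)
      · have h1 : x.1 = f x.2 := hmemS1 x (hSMS1 hx)
        have hc : ((f x.2, x.2) : ℤ × Q0) ∈ SM := by
          rw [← h1]
          exact hx
        rw [hg]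
        simp only [if_pos hc]
        exact h1
      · have h1 : y.1 = f y.2 := hmemS1 y (hSNS1 hy)
        have hnot : ((f y.2, y.2) : ℤ × Q0) ∉ SM := by
          intro hcon
          have hsn : ((f y.2, y.2) : ℤ × Q0) ∈ SN := by rw [← h1]; exact hy
          exact Set.disjoint_left.mp hdisj hcon hsn
        rw [htau_apply, hg]
        simp only [if_neg hnot]
        omega
    · intro hxg
      by_cases hc : ((f x.2, x.2) : ℤ × Q0) ∈ SM
      · left
        have hx1 : x.1 = f x.2 := by rw [hg] at hxg; simpa [if_pos hc] using hxg
        have : x = (f x.2, x.2) := Prod.ext hx1 rfl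
        rw [this]
        exact hc
      · right
        refine ⟨(f x.2, x.2), hSN_of_not _ hc, ?_⟩
        rw [htau_apply]
        have hx1 : x.1 = f x.2 - 1 := by rw [hg] at hxg; simpa [if_neg hc] using hxg
        exact Prod.ext (show (f x.2 - 1 : ℤ) = x.1 by omega) rfl
  -- compatibility of g along arrows of Q
  have hgcompat : ∀ p q, QArrow p q → g q = g p ∨ g q = g p - 1 := by
    intro p q hpq
    have hne : p ≠ q := by intro h; rw [h] at hpq; exact hnoloop q hpq
    have harr := hedge p q ⟨hne, Or.inl hpq⟩
    by_cases hp : ((f p, p) : ℤ × Q0) ∈ SM <;>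
      by_cases hq' : ((f q, q) : ℤ × Q0) ∈ SM
    · rw [hg]; simp only [if_pos hp, if_pos hq']
      exact hfcompat p q hpq
    · obtain ⟨hPL, hQN⟩ := hcut _ hp _ (hSN_of_not q hq') harr
      rcases hLN with ⟨hN1, hq2⟩ | ⟨hN1, hq2⟩
      · have e1 : f p = L.1 := congrArg Prod.fst hPL
        have e2 : f q = N.1 := congrArg Prod.fst hQN
        rw [hg]; simp only [if_pos hp, if_neg hq']
        right; omega
      · exfalso
        have e3 : p = L.2 := congrArg Prod.snd hPL
        have e4 : q = N.2 := congrArg Prod.snd hQN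
        rw [← e3, ← e4] at hq2
        exact hno2 p q hpq hq2
    · obtain ⟨hQL, hPN⟩ := hcut _ hq' _ (hSN_of_not p hp) harr.symm
      rcases hLN with ⟨hN1, hq2⟩ | ⟨hN1, hq2⟩
      · exfalso
        have e3 : q = L.2 := congrArg Prod.snd hQL
        have e4 : p = N.2 := congrArg Prod.snd hPN
        rw [← e3, ← e4] at hq2
        exact hno2 p q hpq hq2
      · have e1 : f q = L.1 := congrArg Prod.fst hQL
        have e2 : f p = N.1 := congrArg Prod.fst hPN
        rw [hg]; simp only [if_neg hp, if_pos hq']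
        left; omega
    · rw [hg]; simp only [if_neg hp, if_neg hq']
      rcases hfcompat p q hpq with h | h
      · left; omega
      · right; omega
  -- the height x.1 - g x.2 is monotone along arrows
  have hstep : ∀ x y : ℤ × Q0, ZArrow QArrow x y →
      y.1 - g y.2 = x.1 - g x.2 ∨ y.1 - g y.2 = x.1 - g x.2 + 1 := by
    rintro x y (⟨h1, h2⟩ | ⟨h1, h2⟩)
    · rcases hgcompat _ _ h2 with h | h
      · left; omega
      · right; omega
    · rcases hgcompat _ _ h2 with h | h
      · right; omega
      · left; omega
  have hmono : ∀ (p : ℕ → ℤ × Q0) (t : ℕ), IsPathOn (ZArrow QArrow) p t →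
      ∀ i j, i ≤ j → j ≤ t → (p i).1 - g (p i).2 ≤ (p j).1 - g (p j).2 := by
    intro p t hp i j hij hjt
    refine mono_of_step (fun k => (p k).1 - g (p k).2) t ?_ i j hij hjt
    intro k hk
    show (p k).1 - g (p k).2 ≤ (p (k + 1)).1 - g (p (k + 1)).2
    rcases hstep _ _ (hp k hk) with h | h <;> omega
  -- the connecting arrow τN → L
  have htNL : ZArrow QArrow (tauZQ Q0 N) L := by
    rcases hLN with ⟨h1, h2⟩ | ⟨h1, h2⟩
    · right
      rw [htau_apply]
      exact ⟨by omega, h2⟩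
    · left
      rw [htau_apply]
      exact ⟨by omega, h2⟩
  constructor
  swap
  · exact Or.inl hMin
  have hsub1 : SM ⊆ SM ∪ (tauZQ Q0) '' SN := Set.subset_union_left
  have hsub2 : (tauZQ Q0) '' SN ⊆ SM ∪ (tauZQ Q0) '' SN := Set.subset_union_right
  refine ⟨?_, ?_, ?_, ?_⟩
  · -- connectivity
    intro x hx y hy
    have htauarr : ∀ a b : ℤ × Q0, ZArrow QArrow a b →
        ZArrow QArrow (tauZQ Q0 a) (tauZQ Q0 b) := by
      rintro a b (⟨h1, h2⟩ | ⟨h1, h2⟩)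
      · left; rw [htau_apply, htau_apply]; exact ⟨by omega, h2⟩
      · right; rw [htau_apply, htau_apply]; exact ⟨by omega, h2⟩
    have chainSM : ∀ a ∈ SM, ∀ b ∈ SM, Relation.ReflTransGen
        (fun a b : ℤ × Q0 => a ∈ SM ∪ (tauZQ Q0) '' SN ∧ b ∈ SM ∪ (tauZQ Q0) '' SN ∧
          (ZArrow QArrow a b ∨ ZArrow QArrow b a)) a b := by
      intro a ha b hb
      refine Relation.ReflTransGen.mono ?_ _ _ (hSMconn a ha b hb)
      rintro u v ⟨h1, h2, h3⟩
      exact ⟨hsub1 h1, hsub1 h2, h3⟩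
    have chainTN : ∀ a ∈ SN, ∀ b ∈ SN, Relation.ReflTransGen
        (fun a b : ℤ × Q0 => a ∈ SM ∪ (tauZQ Q0) '' SN ∧ b ∈ SM ∪ (tauZQ Q0) '' SN ∧
          (ZArrow QArrow a b ∨ ZArrow QArrow b a)) (tauZQ Q0 a) (tauZQ Q0 b) := by
      intro a ha b hb
      refine Relation.ReflTransGen.lift (tauZQ Q0) ?_ _ _ (hSNconn a ha b hb)
      rintro u v ⟨h1, h2, h3⟩
      exact ⟨hsub2 ⟨u, h1, rfl⟩, hsub2 ⟨v, h2, rfl⟩, h3.imp (htauarr u v) (htauarr v u)⟩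
    have hbr1 : Relation.ReflTransGen
        (fun a b : ℤ × Q0 => a ∈ SM ∪ (tauZQ Q0) '' SN ∧ b ∈ SM ∪ (tauZQ Q0) '' SN ∧
          (ZArrow QArrow a b ∨ ZArrow QArrow b a)) (tauZQ Q0 N) L :=
      Relation.ReflTransGen.single ⟨hsub2 ⟨N, hNin, rfl⟩, hsub1 hLin, Or.inl htNL⟩
    have hbr2 : Relation.ReflTransGen
        (fun a b : ℤ × Q0 => a ∈ SM ∪ (tauZQ Q0) '' SN ∧ b ∈ SM ∪ (tauZQ Q0) '' SN ∧
          (ZArrow QArrow a b ∨ ZArrow QArrow b a)) L (tauZQ Q0 N) :=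
      Relation.ReflTransGen.single ⟨hsub1 hLin, hsub2 ⟨N, hNin, rfl⟩, Or.inr htNL⟩
    rcases hx with hx | ⟨x', hx', rfl⟩ <;> rcases hy with hy | ⟨y', hy', rfl⟩
    · exact chainSM _ hx _ hy
    · exact ((chainSM _ hx _ hLin).trans hbr2).trans (chainTN _ hNin _ hy')
    · exact ((chainTN _ hx' _ hNin).trans hbr1).trans (chainSM _ hLin _ hy)
    · exact chainTN _ hx' _ hy'
  · -- no directed cycles
    intro p t ht hpath hmem heq
    have hle : ∀ i j, i ≤ j → j ≤ t → (p i).1 ≤ (p j).1 := by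
      refine mono_of_step (fun k => (p k).1) t ?_
      intro k hk
      show (p k).1 ≤ (p (k + 1)).1
      rcases hpath k hk with ⟨h, -⟩ | ⟨h, -⟩ <;> omega
    have htt : (p t).1 = (p 0).1 := by rw [← heq]
    have hQ : ∀ i < t, QArrow (p i).2 (p (i + 1)).2 := by
      intro i hi
      rcases hpath i hi with ⟨-, h⟩ | ⟨h1, h2⟩
      · exact h
      · exfalso
        have l1 : (p 0).1 ≤ (p i).1 := hle 0 i (by omega) (by omega)
        have l2 : (p (i + 1)).1 ≤ (p t).1 := hle (i + 1) t (by omega) (by omega)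
        omega
    exact no_closed QArrow hT hnoloop hno2 t ht (fun i => (p i).2) hQ (congrArg Prod.snd heq)
  · -- orbit condition
    intro x
    have hmem' : ∀ n : ℤ, ((tauZQ Q0 ^ n) x ∈ SM ∪ (tauZQ Q0) '' SN) ↔ n = x.1 - g x.2 := by
      intro n
      rw [tau_pow, hS2mem]
      show x.1 - n = g x.2 ↔ _
      omega
    exact ⟨x.1 - g x.2, (hmem' _).mpr rfl, fun m hm => (hmem' m).mp hm⟩
  · -- convexity
    intro p t hpath h0 ht i hit
    rw [hS2mem] at h0 ht ⊢
    have l1 := hmono p t hpath 0 i (by omega) hit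
    have l2 := hmono p t hpath i t hit le_rfl
    omega

end Stmt14
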